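/- Let (X, d) be a metric space, m ∈ ℕ, and let k : (0,∞) × X × X → [0,∞) satisfy the lower bound k(t,x,y) ≥ c · e(t,x,y) for all t ∈ (0,1] and x, y ∈ X, for some constant c > 0, where e(t,x,y) := (4πt)^{−m/2} exp(−d(x,y)²/(4t)). Let V be a real normed vector space and q, q' : (0,∞) × X × X → V. Suppose there exist constants C ≥ 0, α, β ≥ 0 with β + α/2 > 1, and T ∈ (0, 1/2] such that ‖q(t,x,y) − q'(t,x,y)‖ ≤ C · e(t,x,y) · d(x,y)^α · t^β for all t ∈ (0,T] and x, y ∈ X. Then there exists a constant C' > 0 such that ‖q(t,x,y) − q'(t,x,y)‖ ≤ C' · t^{β+α/2} · k(2t,x,y) for all t ∈ (0,T] and x, y ∈ X; in particular the exponent β + α/2 of t is strictly greater than 1. -/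
import Mathlib


/-- The Gaussian kernel `e(t,x,y) := (4πt)^{−m/2} exp(−d(x,y)²/(4t))` on a metric space. -/
noncomputable def gaussKernel {X : Type*} [MetricSpace X] (m : ℕ) (t : ℝ) (x y : X) : ℝ :=
  (4 * Real.pi * t) ^ (-(m : ℝ) / 2) * Real.exp (-(dist x y) ^ 2 / (4 * t))

lemma aux_pow_mul_exp_le (α : ℝ) (hα : 0 ≤ α) (u : ℝ) (hu : 0 ≤ u) :
    u ^ (α / 2) * Real.exp (-u) ≤ (Nat.factorial (Nat.ceil (α / 2)) : ℝ) := by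
  set n := Nat.ceil (α / 2)
  have hfac : (1 : ℝ) ≤ (n.factorial : ℝ) := by
    exact_mod_cast Nat.one_le_iff_ne_zero.mpr (Nat.factorial_ne_zero n)
  rcases le_or_gt u 1 with h1 | h1
  · have h2 : u ^ (α / 2) ≤ 1 := Real.rpow_le_one hu h1 (by linarith)
    have h3 : Real.exp (-u) ≤ 1 := Real.exp_le_one_iff.mpr (by linarith)
    calc u ^ (α / 2) * Real.exp (-u) ≤ 1 * 1 :=
          mul_le_mul h2 h3 (Real.exp_pos _).le one_pos.le
      _ ≤ (n.factorial : ℝ) := by linarith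
  · have hu1 : (1:ℝ) ≤ u := h1.le
    have h2 : u ^ (α / 2) ≤ u ^ (n : ℝ) :=
      Real.rpow_le_rpow_of_exponent_le hu1 (Nat.le_ceil _)
    have h3 : u ^ (n : ℝ) = u ^ n := Real.rpow_natCast u n
    have h4 : u ^ n ≤ n.factorial * Real.exp u := by
      have hs : u ^ n / n.factorial ≤ Real.exp u := by
        calc u ^ n / n.factorial
            ≤ ∑ i ∈ Finset.range (n+1), u ^ i / (Nat.factorial i : ℝ) := by
              refine Finset.single_le_sum (f := fun i => u ^ i / (Nat.factorial i : ℝ))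
                (fun i _ => ?_) (Finset.self_mem_range_succ n)
              positivity
          _ ≤ Real.exp u := Real.sum_le_exp_of_nonneg hu _
      rw [div_le_iff₀ (by positivity)] at hs
      linarith [hs]
    calc u ^ (α / 2) * Real.exp (-u) ≤ u ^ n * Real.exp (-u) := by
          rw [← h3]; exact mul_le_mul_of_nonneg_right h2 (Real.exp_pos _).le
      _ ≤ (n.factorial * Real.exp u) * Real.exp (-u) :=
          mul_le_mul_of_nonneg_right h4 (Real.exp_pos _).le
      _ = n.factorial := by rw [mul_assoc, ← Real.exp_add]; simp

lemma gauss_double {X : Type*} [MetricSpace X] (m : ℕ) {t : ℝ} (ht : 0 < t) (x y : X) :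
    gaussKernel m t x y
      = 2 ^ ((m:ℝ)/2) * Real.exp (-(dist x y)^2 / (8*t)) * gaussKernel m (2*t) x y := by
  unfold gaussKernel
  have h1 : (4*Real.pi*(2*t)) ^ (-(m:ℝ)/2) = 2^(-(m:ℝ)/2) * (4*Real.pi*t)^(-(m:ℝ)/2) := by
    rw [show 4*Real.pi*(2*t) = 2*(4*Real.pi*t) by ring,
      Real.mul_rpow (by norm_num) (by positivity)]
  have h2 : Real.exp (-(dist x y)^2/(4*t))
      = Real.exp (-(dist x y)^2/(8*t)) * Real.exp (-(dist x y)^2/(4*(2*t))) := by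
    rw [← Real.exp_add]; congr 1; field_simp; ring
  have h3 : (2:ℝ)^((m:ℝ)/2) * (2:ℝ)^(-(m:ℝ)/2) = 1 := by
    rw [← Real.rpow_add two_pos, show (m:ℝ)/2 + -(m:ℝ)/2 = 0 by ring, Real.rpow_zero]
  rw [h1, h2]
  linear_combination (-( (4*Real.pi*t)^(-(m:ℝ)/2) * Real.exp (-(dist x y)^2/(8*t))
    * Real.exp (-(dist x y)^2/(4*(2*t))))) * h3

/-- Let `(X,d)` be a metric space, `m ∈ ℕ`, and `k : (0,∞) × X × X → [0,∞)` satisfying the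
lower bound `k(t,x,y) ≥ c · e(t,x,y)` for `t ∈ (0,1]` and some `c > 0`. Let `V` be a real
normed vector space and `q, q' : (0,∞) × X × X → V`. Suppose there are constants `C ≥ 0`,
`α, β ≥ 0` with `β + α/2 > 1` and `T ∈ (0, 1/2]` such that
`‖q(t,x,y) − q'(t,x,y)‖ ≤ C · e(t,x,y) · d(x,y)^α · t^β` for all `t ∈ (0,T]` and `x, y ∈ X`.
Then there is `C' > 0` with `‖q(t,x,y) − q'(t,x,y)‖ ≤ C' · t^{β+α/2} · k(2t,x,y)` for all
`t ∈ (0,T]` and `x, y ∈ X`; in particular the exponent `β + α/2` of `t` is strictly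
greater than `1`. -/
theorem heat_related_of_gauss_est {X : Type*} [MetricSpace X] (m : ℕ)
    {V : Type*} [NormedAddCommGroup V] [NormedSpace ℝ V]
    (k : ℝ → X → X → ℝ) (hknn : ∀ t : ℝ, 0 < t → ∀ x y : X, 0 ≤ k t x y)
    (c : ℝ) (hc : 0 < c)
    (hk : ∀ t : ℝ, 0 < t → t ≤ 1 → ∀ x y : X, c * gaussKernel m t x y ≤ k t x y)
    (q q' : ℝ → X → X → V)
    (C α β T : ℝ) (hC : 0 ≤ C) (hα : 0 ≤ α) (hβ : 0 ≤ β)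
    (hexp : 1 < β + α / 2) (hT0 : 0 < T) (hT : T ≤ 1 / 2)
    (hqq' : ∀ t : ℝ, 0 < t → t ≤ T → ∀ x y : X,
      ‖q t x y - q' t x y‖ ≤ C * gaussKernel m t x y * (dist x y) ^ α * t ^ β) :
    (∃ C' : ℝ, 0 < C' ∧ ∀ t : ℝ, 0 < t → t ≤ T → ∀ x y : X,
      ‖q t x y - q' t x y‖ ≤ C' * t ^ (β + α / 2) * k (2 * t) x y) ∧ 1 < β + α / 2 := by
  refine ⟨?_, hexp⟩
  set N : ℝ := (Nat.factorial (Nat.ceil (α / 2)) : ℝ) with hN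
  have hNpos : 0 < N := by positivity
  set D : ℝ := C * 2 ^ ((m:ℝ)/2) * 8 ^ (α/2) * N / c with hD
  have hDnn : 0 ≤ D := by positivity
  refine ⟨max 1 D, lt_of_lt_of_le one_pos (le_max_left _ _), fun t ht htT x y => ?_⟩
  set d := dist x y with hdd
  have hd : 0 ≤ d := dist_nonneg
  have h2t1 : 2 * t ≤ 1 := by linarith
  have h2t0 : 0 < 2 * t := by linarith
  have he2 : 0 ≤ gaussKernel m (2*t) x y := by
    unfold gaussKernel; positivity
  set u : ℝ := d^2 / (8*t) with hu
  have hunn : 0 ≤ u := by positivity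
  -- d^α = (8t)^(α/2) * u^(α/2)
  have hdα : d ^ α = (8*t) ^ (α/2) * u ^ (α/2) := by
    rw [← Real.mul_rpow (by positivity) hunn, hu,
      show (8*t) * (d^2/(8*t)) = d^2 by field_simp,
      ← Real.rpow_natCast d 2, ← Real.rpow_mul hd]
    congr 1; push_cast; ring
  have hkey : u ^ (α/2) * Real.exp (-u) ≤ N := aux_pow_mul_exp_le α hα u hunn
  -- step 2
  have step2 : gaussKernel m t x y * d ^ α
      ≤ 2 ^ ((m:ℝ)/2) * 8 ^ (α/2) * N * t ^ (α/2) * gaussKernel m (2*t) x y := by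
    rw [gauss_double m ht x y, hdα,
      Real.mul_rpow (by norm_num : (0:ℝ) ≤ 8) ht.le]
    have hexpu : Real.exp (-d^2/(8*t)) = Real.exp (-u) := by rw [hu]; ring_nf
    rw [hexpu]
    have hpos : 0 ≤ 2 ^ ((m:ℝ)/2) * 8 ^ (α/2) * t ^ (α/2) * gaussKernel m (2*t) x y := by
      positivity
    calc 2 ^ ((m:ℝ)/2) * Real.exp (-u) * gaussKernel m (2*t) x y
          * (8 ^ (α/2) * t ^ (α/2) * u ^ (α/2))
        = (2 ^ ((m:ℝ)/2) * 8 ^ (α/2) * t ^ (α/2) * gaussKernel m (2*t) x y)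
          * (u ^ (α/2) * Real.exp (-u)) := by ring
      _ ≤ (2 ^ ((m:ℝ)/2) * 8 ^ (α/2) * t ^ (α/2) * gaussKernel m (2*t) x y) * N :=
          mul_le_mul_of_nonneg_left hkey hpos
      _ = 2 ^ ((m:ℝ)/2) * 8 ^ (α/2) * N * t ^ (α/2) * gaussKernel m (2*t) x y := by ring
  have htβα : t ^ (β + α/2) = t ^ β * t ^ (α/2) := Real.rpow_add ht _ _
  have hke : gaussKernel m (2*t) x y ≤ k (2*t) x y / c := by
    rw [le_div_iff₀ hc]
    linarith [hk (2*t) h2t0 h2t1 x y]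
  have htβnn : 0 ≤ t ^ β := Real.rpow_nonneg ht.le _
  have htαnn : 0 ≤ t ^ (α/2) := Real.rpow_nonneg ht.le _
  have hknns : 0 ≤ k (2*t) x y := hknn (2*t) h2t0 x y
  calc ‖q t x y - q' t x y‖
      ≤ C * gaussKernel m t x y * d ^ α * t ^ β := hqq' t ht htT x y
    _ = (gaussKernel m t x y * d ^ α) * (C * t ^ β) := by ring
    _ ≤ (2 ^ ((m:ℝ)/2) * 8 ^ (α/2) * N * t ^ (α/2) * gaussKernel m (2*t) x y) * (C * t ^ β) :=
        mul_le_mul_of_nonneg_right step2 (by positivity)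
    _ = (C * 2 ^ ((m:ℝ)/2) * 8 ^ (α/2) * N * (t ^ β * t ^ (α/2))) * gaussKernel m (2*t) x y := by
        ring
    _ ≤ (C * 2 ^ ((m:ℝ)/2) * 8 ^ (α/2) * N * (t ^ β * t ^ (α/2))) * (k (2*t) x y / c) := by
        refine mul_le_mul_of_nonneg_left hke (by positivity)
    _ = D * t ^ (β + α/2) * k (2*t) x y := by
        rw [htβα, hD]; field_simp
    _ ≤ max 1 D * t ^ (β + α/2) * k (2*t) x y := by
        have : 0 ≤ t ^ (β + α/2) * k (2*t) x y := mul_nonneg (by positivity) hknns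
        nlinarith [le_max_right 1 D]
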